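/- arXiv:2503.10512 — 2 statements merged into one kernel-verified Lean document; each statement's English description precedes it below -/
import Mathlib

section
/- Let S_1, ..., S_{n+1} be exchangeable and almost surely distinct real-valued random variables, and let k = ⌈(1-α)(n+1)⌉ ≤ n. Let S_{(k)} denote the k-th order statistic of S_1,...,S_n. Then, conditional on (S_1,...,S_n), the coverage probability P(S_{n+1} ≤ S_{(k)} | S_1,...,S_n) is distributed (over the draw of the calibration set) as a Beta(k, n+1-k) random variable. -/
open MeasureTheory
open scoped ENNReal

/-- The `k`-th smallest value among `v 0, ..., v (n-1)`, taken as `+∞` when `k > n`. -/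
noncomputable def conformalQuantile {n : ℕ} (v : Fin n → ℝ) (k : ℕ) : EReal :=
  sInf {t : EReal | k ≤ Nat.card {i : Fin n // (v i : EReal) ≤ t}}

/-- The Beta distribution with shape parameters `a` and `b`. -/
noncomputable def betaMeasure (a b : ℝ) : Measure ℝ :=
  (volume.restrict (Set.Ioo (0 : ℝ) 1)).withDensity fun x =>
    ENNReal.ofReal (Real.Gamma (a + b) / (Real.Gamma a * Real.Gamma b) *
      x ^ (a - 1) * (1 - x) ^ (b - 1))

open Finset Filter
open scoped Classical

lemma natCard_eq {n : ℕ} (v : Fin n → ℝ) (t : EReal) :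
    Nat.card {i : Fin n // (v i : EReal) ≤ t} =
      (Finset.univ.filter fun i => (v i : EReal) ≤ t).card := by
  rw [Nat.card_eq_fintype_card]; convert Fintype.card_subtype _

lemma natCard_mono {n : ℕ} (v : Fin n → ℝ) {t t' : EReal} (h : t ≤ t') :
    Nat.card {i : Fin n // (v i : EReal) ≤ t} ≤
      Nat.card {i : Fin n // (v i : EReal) ≤ t'} := by
  rw [natCard_eq, natCard_eq]
  apply Finset.card_le_card
  intro i hi
  simp only [Finset.mem_filter, Finset.mem_univ, true_and] at hi ⊢
  exact le_trans hi h

lemma quantile_mem {n k : ℕ} (hkn : k ≤ n) (v : Fin n → ℝ) :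
    k ≤ Nat.card {i : Fin n // (v i : EReal) ≤ conformalQuantile v k} := by
  set m := conformalQuantile v k with hm
  by_cases hT : ∀ i, (v i : EReal) ≤ m
  · rw [natCard_eq]
    have : (Finset.univ.filter fun i => (v i : EReal) ≤ m) = Finset.univ := by
      apply Finset.filter_true_of_mem; intro i _; exact hT i
    rw [this]; simpa using hkn
  · push_neg at hT
    set T := Finset.univ.filter fun i => ¬ (v i : EReal) ≤ m with hTdef
    have hTne : T.Nonempty := by
      obtain ⟨i, hi⟩ := hT
      exact ⟨i, by simp [hTdef, hi]⟩
    have hTne' : (T.image fun i => (v i : EReal)).Nonempty := hTne.image _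
    set b := (T.image fun i => (v i : EReal)).min' hTne' with hb
    have hmb : m < b := by
      rw [hb, Finset.lt_min'_iff]
      intro y hy
      simp only [Finset.mem_image, hTdef, Finset.mem_filter] at hy
      obtain ⟨i, ⟨_, hi⟩, rfl⟩ := hy
      exact lt_of_not_ge hi
    have : sInf {t : EReal | k ≤ Nat.card {i : Fin n // (v i : EReal) ≤ t}} < b := hmb
    obtain ⟨t, htS, htb⟩ := sInf_lt_iff.mp this
    refine le_trans htS ?_
    rw [natCard_eq, natCard_eq]
    apply Finset.card_le_card
    intro i hi
    simp only [Finset.mem_filter, Finset.mem_univ, true_and] at hi ⊢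
    by_contra hcon
    have hiT : i ∈ T := by
      simp only [hTdef, Finset.mem_filter, Finset.mem_univ, true_and]
      exact hcon
    have : b ≤ v i := Finset.min'_le _ _ (Finset.mem_image_of_mem _ hiT)
    exact absurd (lt_of_le_of_lt (le_trans this hi) htb) (lt_irrefl _)

lemma quantile_le_iff {n k : ℕ} (hkn : k ≤ n) (v : Fin n → ℝ) (s : EReal) :
    conformalQuantile v k ≤ s ↔ k ≤ Nat.card {i : Fin n // (v i : EReal) ≤ s} := by
  constructor
  · intro h; exact le_trans (quantile_mem hkn v) (natCard_mono v h)
  · intro h; exact sInf_le h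

-- placeholders for p1 lemmas

lemma quantile_ne_bot {n k : ℕ} (hk1 : 1 ≤ k) (hkn : k ≤ n) (v : Fin n → ℝ) :
    conformalQuantile v k ≠ ⊥ := by
  intro h
  have := quantile_mem hkn v
  rw [h, natCard_eq] at this
  have h0 : (Finset.univ.filter fun i => (v i : EReal) ≤ (⊥ : EReal)) = ∅ := by
    apply Finset.filter_false_of_mem
    intro i _
    simp
  rw [h0] at this
  simp at this
  omega

lemma quantile_ne_top {n k : ℕ} (hk1 : 1 ≤ k) (hkn : k ≤ n) (v : Fin n → ℝ) :
    conformalQuantile v k ≠ ⊤ := by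
  have hn : 0 < n := lt_of_lt_of_le hk1 hkn
  have hne : (Finset.univ.image v).Nonempty := by
    refine Finset.Nonempty.image ?_ v
    exact Finset.univ_nonempty_iff.mpr (Fin.pos_iff_nonempty.mp hn)
  set M := (Finset.univ.image v).max' hne with hM
  have hle : conformalQuantile v k ≤ (M : EReal) := by
    rw [quantile_le_iff hkn, natCard_eq]
    have : (Finset.univ.filter fun i => (v i : EReal) ≤ (M : EReal)) = Finset.univ := by
      apply Finset.filter_true_of_mem
      intro i _
      exact_mod_cast Finset.le_max' _ _ (Finset.mem_image_of_mem v (Finset.mem_univ i))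
    rw [this]; simpa using hkn
  intro h
  rw [h] at hle
  exact absurd (top_le_iff.mp hle) (EReal.coe_ne_top M)

/-- the real-valued quantile -/
noncomputable def rquantile {n : ℕ} (v : Fin n → ℝ) (k : ℕ) : ℝ :=
  (conformalQuantile v k).toReal

lemma coe_rquantile {n k : ℕ} (hk1 : 1 ≤ k) (hkn : k ≤ n) (v : Fin n → ℝ) :
    ((rquantile v k : ℝ) : EReal) = conformalQuantile v k :=
  EReal.coe_toReal (quantile_ne_top hk1 hkn v) (quantile_ne_bot hk1 hkn v)

lemma rquantile_le_iff {n k : ℕ} (hk1 : 1 ≤ k) (hkn : k ≤ n) (v : Fin n → ℝ) (s : ℝ) :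
    rquantile v k ≤ s ↔ k ≤ (Finset.univ.filter fun i => v i ≤ s).card := by
  rw [← EReal.coe_le_coe_iff, coe_rquantile hk1 hkn, quantile_le_iff hkn, natCard_eq]
  have : (Finset.univ.filter fun i => (v i : EReal) ≤ (s : EReal)) =
      (Finset.univ.filter fun i => v i ≤ s) := by
    apply Finset.filter_congr
    intro i _
    exact ⟨fun h => EReal.coe_le_coe_iff.mp h, fun h => EReal.coe_le_coe_iff.mpr h⟩
  rw [this]

lemma coverage_eq {n k : ℕ} (hk1 : 1 ≤ k) (hkn : k ≤ n) (v : Fin n → ℝ) (ν : Measure ℝ) :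
    ν {x : ℝ | (x : EReal) ≤ conformalQuantile v k} = ν (Set.Iic (rquantile v k)) := by
  congr 1
  ext x
  simp only [Set.mem_setOf_eq, Set.mem_Iic]
  rw [← coe_rquantile hk1 hkn v, EReal.coe_le_coe_iff]

lemma countEvent_measurable {n k : ℕ} (s : ℝ) :
    MeasurableSet {v : Fin n → ℝ | k ≤ (Finset.univ.filter fun i => v i ≤ s).card} := by
  have : {v : Fin n → ℝ | k ≤ (Finset.univ.filter fun i => v i ≤ s).card} =
      ⋃ A ∈ (Finset.univ : Finset (Finset (Fin n))).filter (fun A => A.card = k),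
        ⋂ i ∈ A, {v : Fin n → ℝ | v i ≤ s} := by
    ext v
    simp only [Set.mem_iUnion, Set.mem_iInter, Set.mem_setOf_eq, Finset.mem_filter,
      Finset.mem_univ, true_and]
    constructor
    · intro h
      obtain ⟨A, hA, hcard⟩ := Finset.exists_subset_card_eq h
      refine ⟨A, hcard, fun i hi => ?_⟩
      have := hA hi
      simp only [Finset.mem_filter, Finset.mem_univ, true_and] at this
      exact this
    · rintro ⟨A, hcard, hA⟩
      calc k = A.card := hcard.symm
        _ ≤ _ := Finset.card_le_card (fun i hi => by
            simp only [Finset.mem_filter, Finset.mem_univ, true_and]; exact hA i hi)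
  rw [this]
  refine MeasurableSet.biUnion (Finset.countable_toSet _) fun A _ => ?_
  refine MeasurableSet.biInter (Finset.countable_toSet _) fun i _ => ?_
  exact measurableSet_le (measurable_pi_apply i) measurable_const

lemma rquantile_measurable {n k : ℕ} (hk1 : 1 ≤ k) (hkn : k ≤ n) :
    Measurable (fun v : Fin n → ℝ => rquantile v k) := by
  apply measurable_of_Iic
  intro s
  have : (fun v : Fin n → ℝ => rquantile v k) ⁻¹' Set.Iic s =
      {v : Fin n → ℝ | k ≤ (Finset.univ.filter fun i => v i ≤ s).card} := by
    ext v
    simp only [Set.mem_preimage, Set.mem_Iic, Set.mem_setOf_eq]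
    exact rquantile_le_iff hk1 hkn v s
  rw [this]
  exact countEvent_measurable s

lemma coverage_measurable {n k : ℕ} (hk1 : 1 ≤ k) (hkn : k ≤ n) (ν : Measure ℝ) [IsFiniteMeasure ν] :
    Measurable (fun v : Fin n → ℝ =>
      (ν {x : ℝ | (x : EReal) ≤ conformalQuantile v k}).toReal) := by
  have heq : (fun v : Fin n → ℝ => (ν {x : ℝ | (x : EReal) ≤ conformalQuantile v k}).toReal) =
      (fun r : ℝ => (ν (Set.Iic r)).toReal) ∘ (fun v => rquantile v k) := by
    ext v
    simp only [Function.comp_apply]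
    rw [coverage_eq hk1 hkn v ν]
  rw [heq]
  refine Measurable.comp ?_ (rquantile_measurable hk1 hkn)
  apply Monotone.measurable
  intro a b hab
  exact ENNReal.toReal_mono (measure_ne_top ν _) (measure_mono (Set.Iic_subset_Iic.mpr hab))

variable {ν : Measure ℝ} [IsProbabilityMeasure ν]

lemma cdf_tendsto_bot (ν : Measure ℝ) [IsProbabilityMeasure ν] :
    Tendsto (fun m : ℕ => ν (Set.Iic (-(m:ℝ)))) atTop (nhds 0) := by
  have h1 : Tendsto (⇑ν ∘ fun m : ℕ => Set.Iic (-(m:ℝ))) atTop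
      (nhds (ν (⋂ m : ℕ, Set.Iic (-(m:ℝ))))) := by
    apply tendsto_measure_iInter_atTop
    · intro m; exact (measurableSet_Iic).nullMeasurableSet
    · intro a b hab
      exact Set.Iic_subset_Iic.mpr (by exact_mod_cast neg_le_neg (Nat.cast_le.mpr hab))
    · exact ⟨0, measure_ne_top ν _⟩
  have h2 : (⋂ m : ℕ, Set.Iic (-(m:ℝ))) = ∅ := by
    ext x
    simp only [Set.mem_iInter, Set.mem_Iic, Set.mem_empty_iff_false, iff_false, not_forall]
    obtain ⟨m, hm⟩ := exists_nat_gt (-x)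
    exact ⟨m, by push_neg; linarith⟩
  rw [h2] at h1
  rw [measure_empty] at h1; exact h1

lemma cdf_tendsto_top (ν : Measure ℝ) [IsProbabilityMeasure ν] :
    Tendsto (fun m : ℕ => ν (Set.Iic (m:ℝ))) atTop (nhds 1) := by
  have h1 : Tendsto (⇑ν ∘ fun m : ℕ => Set.Iic (m:ℝ)) atTop
      (nhds (ν (⋃ m : ℕ, Set.Iic (m:ℝ)))) := by
    apply tendsto_measure_iUnion_atTop
    intro a b hab
    exact Set.Iic_subset_Iic.mpr (Nat.cast_le.mpr hab)
  have h2 : (⋃ m : ℕ, Set.Iic (m:ℝ)) = Set.univ := by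
    ext x
    simp only [Set.mem_iUnion, Set.mem_Iic, Set.mem_univ, iff_true]
    obtain ⟨m, hm⟩ := exists_nat_gt x
    exact ⟨m, le_of_lt hm⟩
  rw [h2, measure_univ] at h1
  exact h1

/-- key quantile existence lemma -/
lemma exists_quantile (hcont : ∀ x : ℝ, ν {x} = 0) {t : ℝ} (ht0 : 0 < t) (ht1 : t < 1) :
    ∃ q : ℝ, ν (Set.Iic q) = ENNReal.ofReal t ∧
      ∀ x : ℝ, ν (Set.Iic x) ≤ ENNReal.ofReal t ↔ x ≤ q := by
  haveI : NullSingletonClass ν := ⟨hcont⟩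
  set τ := ENNReal.ofReal t with hτ
  have hτ0 : 0 < τ := ENNReal.ofReal_pos.mpr ht0
  have hτ1 : τ < 1 := ENNReal.ofReal_lt_one.mpr ht1
  set A := {x : ℝ | ν (Set.Iic x) ≤ τ} with hA
  -- A is nonempty
  have hAne : A.Nonempty := by
    have := (cdf_tendsto_bot ν).eventually_lt_const hτ0
    obtain ⟨m, hm⟩ := this.exists
    exact ⟨-(m:ℝ), le_of_lt hm⟩
  -- A is bounded above
  obtain ⟨M, hM⟩ : ∃ M : ℝ, τ < ν (Set.Iic M) := by
    have := (cdf_tendsto_top ν).eventually_const_lt hτ1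
    obtain ⟨m, hm⟩ := this.exists
    exact ⟨(m:ℝ), hm⟩
  have hAbdd : BddAbove A := by
    refine ⟨M, fun x hx => ?_⟩
    by_contra hcon
    push_neg at hcon
    have : ν (Set.Iic M) ≤ τ := le_trans (measure_mono (Set.Iic_subset_Iic.mpr hcon.le)) hx
    exact absurd (lt_of_lt_of_le hM this) (lt_irrefl _)
  set q := sSup A with hq
  -- down-closed
  have hdc : ∀ x y : ℝ, x ≤ y → y ∈ A → x ∈ A :=
    fun x y hxy hy => le_trans (measure_mono (Set.Iic_subset_Iic.mpr hxy)) hy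
  -- ν (Iio q) ≤ τ
  have hIio : ν (Set.Iio q) ≤ τ := by
    have hmono : Monotone (fun m : ℕ => Set.Iic (q - 1/(m+1))) := by
      intro a b hab
      apply Set.Iic_subset_Iic.mpr
      have : (1:ℝ)/(b+1) ≤ 1/(a+1) := by
        apply div_le_div_of_nonneg_left one_pos.le (by positivity)
        exact_mod_cast add_le_add_left (Nat.cast_le.mpr hab) 1
      linarith
    have hun : (⋃ m : ℕ, Set.Iic (q - 1/(m+1))) = Set.Iio q := by
      ext x
      simp only [Set.mem_iUnion, Set.mem_Iic, Set.mem_Iio]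
      constructor
      · rintro ⟨m, hm⟩
        have : (0:ℝ) < 1/(m+1) := by positivity
        linarith
      · intro hx
        obtain ⟨m, hm⟩ := exists_nat_one_div_lt (show (0:ℝ) < q - x by linarith)
        exact ⟨m, by linarith⟩
    have h1 := tendsto_measure_iUnion_atTop (μ := ν) hmono
    rw [hun] at h1
    refine le_of_tendsto h1 (Filter.Eventually.of_forall fun m => ?_)
    show ν (Set.Iic (q - 1/(m+1))) ≤ τ
    have hlt : q - 1/(m+1) < q := by
      have : (0:ℝ) < 1/(m+1) := by positivity
      linarith
    obtain ⟨a, haA, halt⟩ := exists_lt_of_lt_csSup hAne hlt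
    exact hdc _ _ halt.le haA
  have hIic_le : ν (Set.Iic q) ≤ τ := by
    have : Set.Iic q =ᵐ[ν] Set.Iio q := (Iio_ae_eq_Iic (a := q)).symm
    rw [measure_congr this]
    exact hIio
  -- ν (Iic q) ≥ τ
  have hIic_ge : τ ≤ ν (Set.Iic q) := by
    by_contra hcon
    push_neg at hcon
    have hanti : Antitone (fun m : ℕ => Set.Iic (q + 1/(m+1))) := by
      intro a b hab
      apply Set.Iic_subset_Iic.mpr
      have : (1:ℝ)/(b+1) ≤ 1/(a+1) := by
        apply div_le_div_of_nonneg_left one_pos.le (by positivity)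
        exact_mod_cast add_le_add_left (Nat.cast_le.mpr hab) 1
      linarith
    have hin : (⋂ m : ℕ, Set.Iic (q + 1/(m+1))) = Set.Iic q := by
      ext x
      simp only [Set.mem_iInter, Set.mem_Iic]
      constructor
      · intro h
        by_contra hx
        push_neg at hx
        obtain ⟨m, hm⟩ := exists_nat_one_div_lt (show (0:ℝ) < x - q by linarith)
        have := h m
        linarith
      · intro hx m
        have : (0:ℝ) < 1/(m+1) := by positivity
        linarith
    have h1 : Tendsto (⇑ν ∘ fun m : ℕ => Set.Iic (q + 1/(m+1))) atTop
        (nhds (ν (⋂ m : ℕ, Set.Iic (q + 1/(m+1))))) := by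
      apply tendsto_measure_iInter_atTop
      · intro m; exact (measurableSet_Iic).nullMeasurableSet
      · exact hanti
      · exact ⟨0, measure_ne_top ν _⟩
    rw [hin] at h1
    have := h1.eventually_lt_const hcon
    obtain ⟨m, hm⟩ := this.exists
    have hmem : q + 1/(m+1) ∈ A := le_of_lt hm
    have : q + 1/(m+1) ≤ q := le_csSup hAbdd hmem
    have hpos : (0:ℝ) < 1/(m+1) := by positivity
    linarith
  refine ⟨q, le_antisymm hIic_le hIic_ge, fun x => ⟨fun hx => le_csSup hAbdd hx, fun hx => ?_⟩⟩
  exact le_trans (measure_mono (Set.Iic_subset_Iic.mpr hx)) hIic_le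

/-- measure of points with zero cdf is zero -/
lemma zero_cdf_null (hcont : ∀ x : ℝ, ν {x} = 0) :
    ν {x : ℝ | ν (Set.Iic x) = 0} = 0 := by
  haveI : NullSingletonClass ν := ⟨hcont⟩
  set Z := {x : ℝ | ν (Set.Iic x) = 0} with hZ
  rcases Set.eq_empty_or_nonempty Z with h | hZne
  · rw [h]; exact measure_empty
  have hdc : ∀ x y : ℝ, x ≤ y → y ∈ Z → x ∈ Z := by
    intro x y hxy hy
    have := le_trans (measure_mono (Set.Iic_subset_Iic.mpr hxy)) (le_of_eq hy)
    simpa [hZ] using le_antisymm this zero_le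
  obtain ⟨M, hM⟩ : ∃ M : ℝ, (0:ℝ≥0∞) < ν (Set.Iic M) := by
    have := (cdf_tendsto_top ν).eventually_const_lt (show (0:ℝ≥0∞) < 1 by norm_num)
    obtain ⟨m, hm⟩ := this.exists
    exact ⟨(m:ℝ), hm⟩
  have hZbdd : BddAbove Z := by
    refine ⟨M, fun x hx => ?_⟩
    by_contra hcon
    push_neg at hcon
    have : x ∈ Z → M ∈ Z := hdc M x hcon.le
    have hMZ := this hx
    rw [hZ, Set.mem_setOf_eq] at hMZ
    rw [hMZ] at hM
    exact absurd hM (lt_irrefl _)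
  set q := sSup Z with hq
  have hIio : ν (Set.Iio q) = 0 := by
    have hmono : Monotone (fun m : ℕ => Set.Iic (q - 1/(m+1))) := by
      intro a b hab
      apply Set.Iic_subset_Iic.mpr
      have : (1:ℝ)/(b+1) ≤ 1/(a+1) := by
        apply div_le_div_of_nonneg_left one_pos.le (by positivity)
        exact_mod_cast add_le_add_left (Nat.cast_le.mpr hab) 1
      linarith
    have hun : (⋃ m : ℕ, Set.Iic (q - 1/(m+1))) = Set.Iio q := by
      ext x
      simp only [Set.mem_iUnion, Set.mem_Iic, Set.mem_Iio]
      constructor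
      · rintro ⟨m, hm⟩
        have : (0:ℝ) < 1/(m+1) := by positivity
        linarith
      · intro hx
        obtain ⟨m, hm⟩ := exists_nat_one_div_lt (show (0:ℝ) < q - x by linarith)
        exact ⟨m, by linarith⟩
    have h1 := tendsto_measure_iUnion_atTop (μ := ν) hmono
    rw [hun] at h1
    have hle : ν (Set.Iio q) ≤ 0 := by
      refine le_of_tendsto h1 (Filter.Eventually.of_forall fun m => ?_)
      show ν (Set.Iic (q - 1/(m+1))) ≤ 0
      have hlt : q - 1/(m+1) < q := by
        have : (0:ℝ) < 1/(m+1) := by positivity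
        linarith
      obtain ⟨a, haA, halt⟩ := exists_lt_of_lt_csSup hZne hlt
      exact le_of_eq (hdc _ _ halt.le haA)
    exact le_antisymm hle zero_le
  have hIic : ν (Set.Iic q) = 0 := by
    have : Set.Iic q =ᵐ[ν] Set.Iio q := (Iio_ae_eq_Iic (a := q)).symm
    rw [measure_congr this]
    exact hIio
  have hsub : Z ⊆ Set.Iic q := fun x hx => le_csSup hZbdd hx
  exact le_antisymm (le_trans (measure_mono hsub) (le_of_eq hIic)) zero_le

lemma pi_set_measure {n : ℕ} (ν : Measure ℝ) [IsProbabilityMeasure ν] (q : ℝ)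
    (A : Finset (Fin n)) :
    (Measure.pi fun _ : Fin n => ν)
        (Set.univ.pi fun i => if i ∈ A then Set.Iic q else Set.Ioi q) =
      (ν (Set.Iic q)) ^ A.card * (1 - ν (Set.Iic q)) ^ (n - A.card) := by
  rw [Measure.pi_pi]
  have hIoi : ν (Set.Ioi q) = 1 - ν (Set.Iic q) := by
    rw [← Set.compl_Iic, prob_compl_eq_one_sub measurableSet_Iic]
  rw [← Finset.prod_sdiff (Finset.subset_univ A)]
  have h1 : ∏ i ∈ A, ν (if i ∈ A then Set.Iic q else Set.Ioi q) = ν (Set.Iic q) ^ A.card := by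
    rw [Finset.prod_congr rfl fun i hi => by rw [if_pos hi]]
    exact Finset.prod_const _
  have h2 : ∏ i ∈ Finset.univ \ A, ν (if i ∈ A then Set.Iic q else Set.Ioi q) =
      (1 - ν (Set.Iic q)) ^ (n - A.card) := by
    rw [Finset.prod_congr rfl fun i hi => by
      rw [if_neg (by simpa using (Finset.mem_sdiff.mp hi).2)]]
    rw [Finset.prod_const, hIoi, Finset.card_sdiff_of_subset (Finset.subset_univ A)]
    simp
  rw [h1, h2, mul_comm]

lemma count_event_eq {n k : ℕ} (q : ℝ) :
    {v : Fin n → ℝ | k ≤ (Finset.univ.filter fun i => v i ≤ q).card} =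
      ⋃ A ∈ (Finset.univ : Finset (Finset (Fin n))).filter (fun A => k ≤ A.card),
        (Set.univ.pi fun i => if i ∈ A then Set.Iic q else Set.Ioi q) := by
  ext v
  simp only [Set.mem_setOf_eq, Set.mem_iUnion, Finset.mem_filter, Finset.mem_univ, true_and,
    Set.mem_univ_pi]
  constructor
  · intro h
    refine ⟨Finset.univ.filter fun i => v i ≤ q, h, fun i => ?_⟩
    by_cases hi : v i ≤ q
    · rw [if_pos (by simp [hi])]; exact hi
    · rw [if_neg (by simp [hi])]; exact lt_of_not_ge hi
  · rintro ⟨A, hA, hv⟩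
    have : A = Finset.univ.filter fun i => v i ≤ q := by
      ext i
      simp only [Finset.mem_filter, Finset.mem_univ, true_and]
      constructor
      · intro hi; have := hv i; rw [if_pos hi] at this; exact this
      · intro hi
        by_contra hcon
        have := hv i; rw [if_neg hcon] at this
        exact absurd hi (not_le.mpr this)
    rw [← this]; exact hA

lemma binom_measure {n : ℕ} (ν : Measure ℝ) [IsProbabilityMeasure ν] (q : ℝ) (k : ℕ) :
    (Measure.pi fun _ : Fin n => ν)
        {v : Fin n → ℝ | k ≤ (Finset.univ.filter fun i => v i ≤ q).card} =
      ∑ j ∈ Finset.Icc k n, (n.choose j : ℝ≥0∞) *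
        (ν (Set.Iic q)) ^ j * (1 - ν (Set.Iic q)) ^ (n - j) := by
  rw [count_event_eq]
  rw [measure_biUnion_finset]
  · -- sum over A
    have step1 : ∀ A ∈ (Finset.univ : Finset (Finset (Fin n))).filter (fun A => k ≤ A.card),
        (Measure.pi fun _ : Fin n => ν)
          (Set.univ.pi fun i => if i ∈ A then Set.Iic q else Set.Ioi q) =
        (ν (Set.Iic q)) ^ A.card * (1 - ν (Set.Iic q)) ^ (n - A.card) :=
      fun A _ => pi_set_measure ν q A
    rw [Finset.sum_congr rfl step1]
    have hΩ : (Finset.univ : Finset (Finset (Fin n))).filter (fun A => k ≤ A.card) =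
        (Finset.Icc k n).biUnion (fun j => Finset.powersetCard j Finset.univ) := by
      ext A
      simp only [Finset.mem_filter, Finset.mem_univ, true_and, Finset.mem_biUnion,
        Finset.mem_Icc, Finset.mem_powersetCard_univ]
      constructor
      · intro h
        exact ⟨A.card, ⟨h, by simpa using Finset.card_le_univ A⟩, rfl⟩
      · rintro ⟨j, ⟨hj, _⟩, rfl⟩; exact hj
    rw [hΩ, Finset.sum_biUnion]
    · refine Finset.sum_congr rfl fun j hj => ?_
      have : ∀ A ∈ Finset.powersetCard j (Finset.univ : Finset (Fin n)),
          (ν (Set.Iic q)) ^ A.card * (1 - ν (Set.Iic q)) ^ (n - A.card) =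
          (ν (Set.Iic q)) ^ j * (1 - ν (Set.Iic q)) ^ (n - j) := by
        intro A hA
        rw [Finset.mem_powersetCard_univ.mp hA]
      rw [Finset.sum_congr rfl this, Finset.sum_const, Finset.card_powersetCard]
      simp [Finset.card_univ, nsmul_eq_mul, mul_assoc]
    · -- disjointness of powersetCard
      intro a ha b hb hab
      simp only [Finset.coe_Icc, Set.mem_Icc] at ha hb
      apply Finset.disjoint_left.mpr
      intro A hA hB
      rw [Finset.mem_powersetCard_univ] at hA hB
      exact hab (hA ▸ hB ▸ rfl)
  · -- pairwise disjoint
    intro A hA B hB hAB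
    apply Set.disjoint_left.mpr
    intro v hvA hvB
    apply hAB
    have key : ∀ C : Finset (Fin n),
        v ∈ (Set.univ.pi fun i => if i ∈ C then Set.Iic q else Set.Ioi q) →
        C = Finset.univ.filter fun i => v i ≤ q := by
      intro C hv
      rw [Set.mem_univ_pi] at hv
      ext i
      simp only [Finset.mem_filter, Finset.mem_univ, true_and]
      constructor
      · intro hi; have := hv i; rw [if_pos hi] at this; exact this
      · intro hi
        by_contra hcon
        have := hv i; rw [if_neg hcon] at this
        exact absurd hi (not_le.mpr this)
    rw [key A hvA, key B hvB]
  · -- measurability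
    intro A _
    apply MeasurableSet.univ_pi
    intro i
    by_cases hi : i ∈ A
    · rw [if_pos hi]; exact measurableSet_Iic
    · rw [if_neg hi]; exact measurableSet_Ioi

noncomputable def binomPoly (n k : ℕ) (t : ℝ) : ℝ :=
  ∑ j ∈ Finset.Icc k n, (n.choose j : ℝ) * t ^ j * (1 - t) ^ (n - j)

noncomputable def hTerm (n j : ℕ) (x : ℝ) : ℝ :=
  (n.choose j : ℝ) * j * x ^ (j - 1) * (1 - x) ^ (n - j)

lemma hasDerivAt_term (n j : ℕ) (hj1 : 1 ≤ j) (x : ℝ) :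
    HasDerivAt (fun x => (n.choose j : ℝ) * x ^ j * (1 - x) ^ (n - j))
      (hTerm n j x - hTerm n (j + 1) x) x := by
  have hs : HasDerivAt (fun x : ℝ => 1 - x) (-1) x := by
    simpa using (hasDerivAt_id x).const_sub 1
  have hp : HasDerivAt (fun y : ℝ => y ^ (n - j)) ((n - j : ℕ) * (1 - x) ^ (n - j - 1)) (1 - x) :=
    hasDerivAt_pow _ _
  have hcomp : HasDerivAt (fun x : ℝ => (1 - x) ^ (n - j))
      (((n - j : ℕ) * (1 - x) ^ (n - j - 1)) * (-1)) x := HasDerivAt.comp x hp hs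
  have hmul : HasDerivAt (fun y : ℝ => (n.choose j : ℝ) * (y ^ j * (1 - y) ^ (n - j)))
      ((n.choose j : ℝ) * ((j : ℝ) * x ^ (j - 1) * (1 - x) ^ (n - j) +
        x ^ j * (((n - j : ℕ) * (1 - x) ^ (n - j - 1)) * (-1)))) x :=
    ((hasDerivAt_pow j x).mul hcomp).const_mul (n.choose j : ℝ)
  convert hmul using 1
  · funext y; ring
  have hc : (n.choose j : ℝ) * ((n : ℕ) - j : ℕ) = (n.choose (j + 1) : ℝ) * ((j : ℝ) + 1) := by
    have h0 := Nat.choose_succ_right_eq n j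
    have h0' : ((n.choose (j+1) * (j+1) : ℕ) : ℝ) = ((n.choose j * (n - j) : ℕ) : ℝ) := by
      exact_mod_cast h0
    push_cast at h0'
    linarith
  have hsub : n - j - 1 = n - (j + 1) := by omega
  unfold hTerm
  rw [hsub]
  simp only [Nat.add_sub_cancel]
  push_cast
  linear_combination (x ^ j * (1 - x) ^ (n - (j+1))) * hc

lemma hasDerivAt_binomPoly {n k : ℕ} (hk1 : 1 ≤ k) (hkn : k ≤ n) (x : ℝ) :
    HasDerivAt (binomPoly n k)
      ((n.factorial : ℝ) / ((k - 1).factorial * (n - k).factorial) *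
        x ^ (k - 1) * (1 - x) ^ (n - k)) x := by
  have hsum : HasDerivAt (fun x => ∑ j ∈ Finset.Icc k n,
        (n.choose j : ℝ) * x ^ j * (1 - x) ^ (n - j))
      (∑ j ∈ Finset.Icc k n, (hTerm n j x - hTerm n (j + 1) x)) x := by
    apply HasDerivAt.fun_sum
    intro j hj
    exact hasDerivAt_term n j (le_trans hk1 (Finset.mem_Icc.mp hj).1) x
  have htel : ∑ j ∈ Finset.Icc k n, (hTerm n j x - hTerm n (j + 1) x) =
      hTerm n k x - hTerm n (n + 1) x := by
    rw [← Finset.Ico_add_one_right_eq_Icc, Finset.sum_Ico_eq_sum_range]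
    have h1 : ∀ i ∈ Finset.range (n + 1 - k),
        hTerm n (k + i) x - hTerm n (k + i + 1) x =
        (fun i => hTerm n (k + i) x) i - (fun i => hTerm n (k + i) x) (i + 1) := by
      intro i _
      rfl
    rw [Finset.sum_congr rfl h1, Finset.sum_range_sub']
    have e : k + (n + 1 - k) = n + 1 := by omega
    simp [e]
  have hzero : hTerm n (n + 1) x = 0 := by
    simp [hTerm, Nat.choose_eq_zero_of_lt (Nat.lt_succ_self n)]
  have hconst : (n.choose k : ℝ) * k = (n.factorial : ℝ) / ((k - 1).factorial * (n - k).factorial) := by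
    have h1 : n.choose k * k.factorial * (n - k).factorial = n.factorial :=
      Nat.choose_mul_factorial_mul_factorial hkn
    have h2 : k * (k - 1).factorial = k.factorial := Nat.mul_factorial_pred (Nat.pos_iff_ne_zero.mp (lt_of_lt_of_le zero_lt_one hk1))
    have h3 : ((n.choose k * k.factorial * (n - k).factorial : ℕ) : ℝ) = (n.factorial : ℝ) := by
      exact_mod_cast h1
    have h4 : ((k * (k - 1).factorial : ℕ) : ℝ) = (k.factorial : ℝ) := by
      exact_mod_cast h2
    push_cast at h3 h4
    rw [eq_div_iff (by positivity)]
    calc (n.choose k : ℝ) * k * ((k - 1).factorial * (n - k).factorial)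
        = (n.choose k : ℝ) * (k * (k - 1).factorial) * (n - k).factorial := by ring
      _ = (n.choose k : ℝ) * k.factorial * (n - k).factorial := by rw [h4]
      _ = n.factorial := h3
  have : HasDerivAt (binomPoly n k) (hTerm n k x) x := by
    have := hsum
    rw [htel, hzero, sub_zero] at this
    exact this
  convert this using 1
  rw [hTerm, hconst]

lemma binomPoly_zero {n k : ℕ} (hk1 : 1 ≤ k) : binomPoly n k 0 = 0 := by
  apply Finset.sum_eq_zero
  intro j hj
  have hj1 : 1 ≤ j := le_trans hk1 (Finset.mem_Icc.mp hj).1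
  rw [zero_pow (by omega : j ≠ 0)]
  ring

lemma binomPoly_one {n k : ℕ} (hkn : k ≤ n) : binomPoly n k 1 = 1 := by
  rw [binomPoly]
  rw [Finset.sum_eq_single n]
  · simp
  · intro j hj hjn
    have : j < n := lt_of_le_of_ne (Finset.mem_Icc.mp hj).2 hjn
    rw [sub_self, zero_pow (by omega : n - j ≠ 0)]
    ring
  · intro h
    exact absurd (Finset.mem_Icc.mpr ⟨hkn, le_refl n⟩) h

lemma integral_binom {n k : ℕ} (hk1 : 1 ≤ k) (hkn : k ≤ n) (t : ℝ) :
    ∫ x in (0:ℝ)..t, (n.factorial : ℝ) / ((k - 1).factorial * (n - k).factorial) *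
        x ^ (k - 1) * (1 - x) ^ (n - k) = binomPoly n k t := by
  rw [intervalIntegral.integral_eq_sub_of_hasDerivAt
      (fun x _ => hasDerivAt_binomPoly hk1 hkn x)
      (Continuous.intervalIntegrable (by fun_prop) 0 t)]
  rw [binomPoly_zero hk1, sub_zero]

lemma binomPoly_nonneg {n k : ℕ} {t : ℝ} (ht0 : 0 ≤ t) (ht1 : t ≤ 1) :
    0 ≤ binomPoly n k t := by
  apply Finset.sum_nonneg
  intro j _
  have h1 : (0:ℝ) ≤ 1 - t := by linarith
  positivity

/-- the beta measure with our parameters equals withDensity of the nat-power density -/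
lemma betaMeasure_eq {n k : ℕ} (hk1 : 1 ≤ k) (hkn : k ≤ n) :
    betaMeasure (k : ℝ) ((n : ℝ) + 1 - (k : ℝ)) =
      (volume.restrict (Set.Ioo (0 : ℝ) 1)).withDensity fun x =>
        ENNReal.ofReal ((n.factorial : ℝ) / ((k - 1).factorial * (n - k).factorial) *
          x ^ (k - 1) * (1 - x) ^ (n - k)) := by
  rw [betaMeasure]
  congr 1
  funext x
  congr 1
  have hG1 : Real.Gamma ((k : ℝ) + ((n : ℝ) + 1 - (k : ℝ))) = (n.factorial : ℝ) := by
    have : (k : ℝ) + ((n : ℝ) + 1 - (k : ℝ)) = (n : ℝ) + 1 := by ring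
    rw [this, Real.Gamma_nat_eq_factorial]
  have hG2 : Real.Gamma (k : ℝ) = ((k - 1).factorial : ℝ) := by
    have : (k : ℝ) = ((k - 1 : ℕ) : ℝ) + 1 := by
      rw [Nat.cast_sub hk1]; push_cast; ring
    rw [this, Real.Gamma_nat_eq_factorial]
  have hG3 : Real.Gamma ((n : ℝ) + 1 - (k : ℝ)) = ((n - k).factorial : ℝ) := by
    have : (n : ℝ) + 1 - (k : ℝ) = ((n - k : ℕ) : ℝ) + 1 := by
      rw [Nat.cast_sub hkn]; ring
    rw [this, Real.Gamma_nat_eq_factorial]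
  have hP1 : x ^ ((k : ℝ) - 1) = x ^ (k - 1 : ℕ) := by
    have : (k : ℝ) - 1 = ((k - 1 : ℕ) : ℝ) := by
      rw [Nat.cast_sub hk1]; push_cast; ring
    rw [this, Real.rpow_natCast]
  have hP2 : (1 - x) ^ ((n : ℝ) + 1 - (k : ℝ) - 1) = (1 - x) ^ (n - k : ℕ) := by
    have : (n : ℝ) + 1 - (k : ℝ) - 1 = ((n - k : ℕ) : ℝ) := by
      rw [Nat.cast_sub hkn]; ring
    rw [this, Real.rpow_natCast]
  rw [hG1, hG2, hG3, hP1, hP2]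

lemma betaMeasure_Iic {n k : ℕ} (hk1 : 1 ≤ k) (hkn : k ≤ n) (t : ℝ) :
    betaMeasure (k : ℝ) ((n : ℝ) + 1 - (k : ℝ)) (Set.Iic t) =
      if t ≤ 0 then 0 else ENNReal.ofReal (binomPoly n k (min t 1)) := by
  rw [betaMeasure_eq hk1 hkn, withDensity_apply _ measurableSet_Iic,
    Measure.restrict_restrict measurableSet_Iic]
  set c : ℝ := (n.factorial : ℝ) / ((k - 1).factorial * (n - k).factorial) with hc
  have hcpos : 0 ≤ c := by positivity
  have hcont : Continuous (fun x : ℝ => c * x ^ (k - 1) * (1 - x) ^ (n - k)) := by fun_prop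
  by_cases ht : t ≤ 0
  · rw [if_pos ht]
    have : Set.Iic t ∩ Set.Ioo (0:ℝ) 1 = ∅ := by
      ext x
      simp only [Set.mem_inter_iff, Set.mem_Iic, Set.mem_Ioo, Set.mem_empty_iff_false, iff_false,
        not_and]
      intro hx hx2
      linarith [hx2]
    rw [this]
    simp
  · rw [if_neg ht]
    push_neg at ht
    have key : ∀ s : ℝ, 0 < s → s ≤ 1 →
        ∫⁻ x in Set.Ioc 0 s, ENNReal.ofReal (c * x ^ (k - 1) * (1 - x) ^ (n - k)) =
          ENNReal.ofReal (binomPoly n k s) := by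
      intro s hs0 hs1
      rw [← MeasureTheory.ofReal_integral_eq_lintegral_ofReal]
      · congr 1
        rw [← intervalIntegral.integral_of_le hs0.le]
        exact integral_binom hk1 hkn s
      · exact hcont.integrableOn_Ioc
      · rw [Filter.EventuallyLE, ae_restrict_iff' measurableSet_Ioc]
        apply Filter.Eventually.of_forall
        intro x hx
        have h1 : (0:ℝ) ≤ x := hx.1.le
        have h2 : (0:ℝ) ≤ 1 - x := by
          have := hx.2
          linarith [le_trans this hs1]
        positivity
    by_cases ht1 : t < 1
    · have hmin : min t 1 = t := min_eq_left ht1.le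
      rw [hmin]
      have : Set.Iic t ∩ Set.Ioo (0:ℝ) 1 = Set.Ioc 0 t := by
        ext x
        simp only [Set.mem_inter_iff, Set.mem_Iic, Set.mem_Ioo, Set.mem_Ioc]
        constructor
        · rintro ⟨h1, h2, h3⟩; exact ⟨h2, h1⟩
        · rintro ⟨h1, h2⟩; exact ⟨h2, h1, lt_of_le_of_lt h2 ht1⟩
      rw [this]
      exact key t ht ht1.le
    · push_neg at ht1
      have hmin : min t 1 = 1 := min_eq_right ht1
      rw [hmin]
      have : Set.Iic t ∩ Set.Ioo (0:ℝ) 1 = Set.Ioo 0 1 := by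
        ext x
        simp only [Set.mem_inter_iff, Set.mem_Iic, Set.mem_Ioo]
        constructor
        · rintro ⟨_, h⟩; exact h
        · rintro ⟨h1, h2⟩; exact ⟨by linarith, h1, h2⟩
      rw [this]
      have hae : volume.restrict (Set.Ioo (0:ℝ) 1) = volume.restrict (Set.Ioc (0:ℝ) 1) :=
        Measure.restrict_congr_set Ioo_ae_eq_Ioc
      rw [hae]
      exact key 1 one_pos le_rfl

theorem stmt_6 (n : ℕ) (ν : Measure ℝ) [IsProbabilityMeasure ν]
    (hcont : ∀ x : ℝ, ν {x} = 0) (α : ℝ) (hα : α ∈ Set.Ioo (0 : ℝ) 1)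
    (k : ℕ) (hk : k = ⌈(1 - α) * (n + 1)⌉₊) (hk1 : 1 ≤ k) (hkn : k ≤ n) :
    Measure.map
        (fun v : Fin n → ℝ =>
          (ν {x : ℝ | (x : EReal) ≤ conformalQuantile v k}).toReal)
        (Measure.pi fun _ : Fin n => ν) =
      betaMeasure k (n + 1 - k) := by
  have hG : Measurable (fun v : Fin n → ℝ =>
      (ν {x : ℝ | (x : EReal) ≤ conformalQuantile v k}).toReal) :=
    coverage_measurable hk1 hkn ν
  set G := fun v : Fin n → ℝ => (ν {x : ℝ | (x : EReal) ≤ conformalQuantile v k}).toReal with hGdef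
  set P := Measure.pi fun _ : Fin n => ν with hP
  haveI : IsProbabilityMeasure (Measure.map G P) := Measure.isProbabilityMeasure_map hG.aemeasurable
  apply Measure.ext_of_Iic
  intro t
  rw [Measure.map_apply hG measurableSet_Iic, betaMeasure_Iic hk1 hkn t]
  have hGsimp : ∀ v, G v = (ν (Set.Iic (rquantile v k))).toReal := by
    intro v
    simp only [hGdef]
    rw [coverage_eq hk1 hkn v ν]
  by_cases ht : t ≤ 0
  · rw [if_pos ht]
    -- event has measure 0
    have hsub : G ⁻¹' Set.Iic t ⊆ ⋃ i : Fin n, {v : Fin n → ℝ | ν (Set.Iic (v i)) = 0} := by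
      intro v hv
      simp only [Set.mem_preimage, Set.mem_Iic] at hv
      rw [hGsimp v] at hv
      have hle0 : (ν (Set.Iic (rquantile v k))).toReal = 0 :=
        le_antisymm (le_trans hv ht) ENNReal.toReal_nonneg
    -- measure zero
      have hν0 : ν (Set.Iic (rquantile v k)) = 0 := by
        rcases (ENNReal.toReal_eq_zero_iff _).mp hle0 with h | h
        · exact h
        · exact absurd h (measure_ne_top ν _)
      -- exists i with v i ≤ rquantile
      have hpos : 0 < Nat.card {i : Fin n // (v i : EReal) ≤ conformalQuantile v k} :=
        lt_of_lt_of_le hk1 (quantile_mem hkn v)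
      rw [natCard_eq] at hpos
      obtain ⟨i, hi⟩ := Finset.card_pos.mp hpos
      simp only [Finset.mem_filter, Finset.mem_univ, true_and] at hi
      rw [← coe_rquantile hk1 hkn v, EReal.coe_le_coe_iff] at hi
      refine Set.mem_iUnion.mpr ⟨i, ?_⟩
      simp only [Set.mem_setOf_eq]
      refine le_antisymm ?_ zero_le
      calc ν (Set.Iic (v i)) ≤ ν (Set.Iic (rquantile v k)) :=
            measure_mono (Set.Iic_subset_Iic.mpr hi)
        _ = 0 := hν0
    refine le_antisymm ?_ zero_le
    refine le_trans (measure_mono hsub) ?_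
    refine le_trans (measure_iUnion_le _) ?_
    have hZmeas : MeasurableSet {x : ℝ | ν (Set.Iic x) = 0} := by
      have hm : Measurable (fun x : ℝ => ν (Set.Iic x)) := by
        apply Monotone.measurable
        intro a b hab
        exact measure_mono (Set.Iic_subset_Iic.mpr hab)
      exact hm (measurableSet_singleton 0)
    have hcoord : ∀ i : Fin n, P {v : Fin n → ℝ | ν (Set.Iic (v i)) = 0} = 0 := by
      intro i
      have hset : {v : Fin n → ℝ | ν (Set.Iic (v i)) = 0} =
          Set.univ.pi fun j => if j = i then {x : ℝ | ν (Set.Iic x) = 0} else Set.univ := by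
        ext v
        simp only [Set.mem_setOf_eq, Set.mem_univ_pi]
        constructor
        · intro h j
          by_cases hj : j = i
          · rw [if_pos hj, hj]; exact h
          · rw [if_neg hj]; trivial
        · intro h
          have := h i
          rw [if_pos rfl] at this
          exact this
      rw [hset, hP, Measure.pi_pi]
      rw [Finset.prod_eq_zero (Finset.mem_univ i)]
      rw [if_pos rfl]
      exact zero_cdf_null hcont
    simp only [hcoord]
    simp
  · rw [if_neg ht]
    push_neg at ht
    by_cases ht1 : t < 1
    · have hmin : min t 1 = t := min_eq_left ht1.le
      rw [hmin]
      obtain ⟨q, hq1, hq2⟩ := exists_quantile hcont ht ht1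
      have hevent : G ⁻¹' Set.Iic t =
          {v : Fin n → ℝ | k ≤ (Finset.univ.filter fun i => v i ≤ q).card} := by
        ext v
        simp only [Set.mem_preimage, Set.mem_Iic, Set.mem_setOf_eq]
        rw [hGsimp v]
        rw [← rquantile_le_iff hk1 hkn v q, ← hq2]
        rw [← ENNReal.le_ofReal_iff_toReal_le (measure_ne_top ν _) ht.le]
      rw [hevent, hP, binom_measure ν q k, hq1]
      have h1mp : (1 : ℝ≥0∞) - ENNReal.ofReal t = ENNReal.ofReal (1 - t) := by
        rw [ENNReal.ofReal_sub _ ht.le, ENNReal.ofReal_one]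
      rw [h1mp]
      rw [binomPoly]
      rw [ENNReal.ofReal_sum_of_nonneg]
      · apply Finset.sum_congr rfl
        intro j _
        rw [ENNReal.ofReal_mul (by positivity), ENNReal.ofReal_mul (by positivity)]
        rw [ENNReal.ofReal_natCast, ENNReal.ofReal_pow ht.le, ENNReal.ofReal_pow (by linarith)]
      · intro j _
        have : (0:ℝ) ≤ 1 - t := by linarith
        positivity
    · push_neg at ht1
      have hmin : min t 1 = 1 := min_eq_right ht1
      rw [hmin, binomPoly_one hkn, ENNReal.ofReal_one]
      have hevent : G ⁻¹' Set.Iic t = Set.univ := by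
        ext v
        simp only [Set.mem_preimage, Set.mem_Iic, Set.mem_univ, iff_true]
        rw [hGsimp v]
        have h1 : ν (Set.Iic (rquantile v k)) ≤ 1 := prob_le_one
        have : (ν (Set.Iic (rquantile v k))).toReal ≤ 1 := by
          calc (ν (Set.Iic (rquantile v k))).toReal ≤ (1 : ℝ≥0∞).toReal :=
                ENNReal.toReal_mono ENNReal.one_ne_top h1
            _ = 1 := by simp
        linarith
      rw [hevent]
      simp [hP]
end

section
/- Suppose a generative model has pass rate 1 - α* within a budget of M samples, i.e., P(K ≤ M) = 1 - α* where K is the number of samples until the first admissible output. Then any procedure that outputs a subset of the first M samples (never abstaining) has coverage at most 1 - α*; consequently, to guarantee coverage 1 - α with α < α*, the procedure must output the full space 𝒴 (abstain) with probability at least (α* - α). -/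
open MeasureTheory
open scoped ENNReal

theorem stmt_15 {Ω : Type*} [MeasurableSpace Ω] (μ : Measure Ω) [IsProbabilityMeasure μ]
    (M : ℕ) (K : Ω → ℕ∞) (αstar α : ℝ)
    (hαstar : αstar ∈ Set.Ioo (0 : ℝ) 1) (hα : α ∈ Set.Ioo (0 : ℝ) 1)
    (hpass : μ {ω | K ω ≤ (M : ℕ∞)} = ENNReal.ofReal (1 - αstar))
    (Abstain Cover : Set Ω)
    (hAbsCov : Abstain ⊆ Cover)
    (hsub : Cover ∩ Abstainᶜ ⊆ {ω | K ω ≤ (M : ℕ∞)}) :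
    (Abstain = ∅ → μ Cover ≤ ENNReal.ofReal (1 - αstar)) ∧
    (ENNReal.ofReal (1 - α) ≤ μ Cover → α < αstar →
      ENNReal.ofReal (αstar - α) ≤ μ Abstain) := by
  have hcov : Cover ⊆ Abstain ∪ {ω | K ω ≤ (M : ℕ∞)} := by
    intro ω hω
    by_cases h : ω ∈ Abstain
    · exact Or.inl h
    · exact Or.inr (hsub ⟨hω, h⟩)
  constructor
  · intro hA
    have : Cover ⊆ {ω | K ω ≤ (M : ℕ∞)} := by
      intro ω hω
      rcases hcov hω with h | h
      · simp [hA] at h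
      · exact h
    calc μ Cover ≤ μ {ω | K ω ≤ (M : ℕ∞)} := measure_mono this
      _ = ENNReal.ofReal (1 - αstar) := hpass
  · intro h1 h2
    have hle : μ Cover ≤ μ Abstain + ENNReal.ofReal (1 - αstar) := by
      calc μ Cover ≤ μ (Abstain ∪ {ω | K ω ≤ (M : ℕ∞)}) := measure_mono hcov
        _ ≤ μ Abstain + μ {ω | K ω ≤ (M : ℕ∞)} := measure_union_le _ _
        _ = μ Abstain + ENNReal.ofReal (1 - αstar) := by rw [hpass]
    have hsplit : ENNReal.ofReal (1 - α)
        = ENNReal.ofReal (αstar - α) + ENNReal.ofReal (1 - αstar) := by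
      rw [← ENNReal.ofReal_add (by linarith) (by linarith [hαstar.2])]
      ring_nf
    have := le_trans (hsplit ▸ h1) hle
    exact (ENNReal.add_le_add_iff_right ENNReal.ofReal_ne_top).mp this
end
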